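/- The rule (ex-middle) (from ∼α,Γ⇒γ and α,Γ⇒γ infer Γ⇒γ) with arbitrary formulas α is derivable from its atomic restriction (at-ex-middle), where α is a propositional variable, over the base calculus sC with cut: if every instance of (at-ex-middle) is available, then every instance of (ex-middle) is admissible. -/
import Mathlib


inductive Fm : Type
  | var : ℕ → Fm
  | conj : Fm → Fm → Fm
  | disj : Fm → Fm → Fm
  | impl : Fm → Fm → Fm
  | neg : Fm → Fm
  deriving DecidableEq

open Fm

/-- Optional rules: cut, (ex-middle), (Peirce), (g-ex-middle), (at-ex-middle). -/
structure Rules where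
  cut : Bool := false
  exMid : Bool := false
  peirce : Bool := false
  gem : Bool := false
  atEx : Bool := false

/-- The sequent calculus sC for Wansing's connexive logic C, with optional extra rules. -/
inductive SC (R : Rules) : Finset Fm → Fm → Prop
  | init1 (p : ℕ) (Γ : Finset Fm) : SC R (insert (var p) Γ) (var p)
  | init2 (p : ℕ) (Γ : Finset Fm) : SC R (insert (neg (var p)) Γ) (neg (var p))
  | cut {Γ Δ : Finset Fm} {a c : Fm} : R.cut = true →
      SC R Γ a → SC R (insert a Δ) c → SC R (Γ ∪ Δ) c
  | implL {Γ Δ : Finset Fm} {a b c : Fm} :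
      SC R Γ a → SC R (insert b Δ) c → SC R (insert (impl a b) (Γ ∪ Δ)) c
  | implR {Γ : Finset Fm} {a b : Fm} :
      SC R (insert a Γ) b → SC R Γ (impl a b)
  | conjL {Γ : Finset Fm} {a b c : Fm} :
      SC R (insert a (insert b Γ)) c → SC R (insert (conj a b) Γ) c
  | conjR {Γ : Finset Fm} {a b : Fm} :
      SC R Γ a → SC R Γ b → SC R Γ (conj a b)
  | disjL {Γ : Finset Fm} {a b c : Fm} :
      SC R (insert a Γ) c → SC R (insert b Γ) c → SC R (insert (disj a b) Γ) c
  | disjR1 {Γ : Finset Fm} {a b : Fm} : SC R Γ a → SC R Γ (disj a b)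
  | disjR2 {Γ : Finset Fm} {a b : Fm} : SC R Γ b → SC R Γ (disj a b)
  | negnegL {Γ : Finset Fm} {a c : Fm} :
      SC R (insert a Γ) c → SC R (insert (neg (neg a)) Γ) c
  | negnegR {Γ : Finset Fm} {a : Fm} : SC R Γ a → SC R Γ (neg (neg a))
  | negimplL {Γ Δ : Finset Fm} {a b c : Fm} :
      SC R Γ a → SC R (insert (neg b) Δ) c → SC R (insert (neg (impl a b)) (Γ ∪ Δ)) c
  | negimplR {Γ : Finset Fm} {a b : Fm} :
      SC R (insert a Γ) (neg b) → SC R Γ (neg (impl a b))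
  | negconjL {Γ : Finset Fm} {a b c : Fm} :
      SC R (insert (neg a) Γ) c → SC R (insert (neg b) Γ) c →
      SC R (insert (neg (conj a b)) Γ) c
  | negconjR1 {Γ : Finset Fm} {a b : Fm} : SC R Γ (neg a) → SC R Γ (neg (conj a b))
  | negconjR2 {Γ : Finset Fm} {a b : Fm} : SC R Γ (neg b) → SC R Γ (neg (conj a b))
  | negdisjL {Γ : Finset Fm} {a b c : Fm} :
      SC R (insert (neg a) (insert (neg b) Γ)) c → SC R (insert (neg (disj a b)) Γ) c
  | negdisjR {Γ : Finset Fm} {a b : Fm} :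
      SC R Γ (neg a) → SC R Γ (neg b) → SC R Γ (neg (disj a b))
  | exMid {Γ : Finset Fm} {a c : Fm} : R.exMid = true →
      SC R (insert (neg a) Γ) c → SC R (insert a Γ) c → SC R Γ c
  | peirce {Γ : Finset Fm} {a b : Fm} : R.peirce = true →
      SC R (insert (impl a b) Γ) a → SC R Γ a
  | gem {Γ : Finset Fm} {a b c : Fm} : R.gem = true →
      SC R (insert (impl a b) Γ) c → SC R (insert a Γ) c → SC R Γ c
  | atEx {Γ : Finset Fm} {p : ℕ} {c : Fm} : R.atEx = true →
      SC R (insert (neg (var p)) Γ) c → SC R (insert (var p) Γ) c → SC R Γ c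

/-- sC (with cut). -/
def sC : Rules := { cut := true }
/-- cut-free sC. -/
def sCcf : Rules := {}
/-- sC3 = sC + (ex-middle). -/
def sC3 : Rules := { cut := true, exMid := true }
/-- sMC = sC + (Peirce). -/
def sMC : Rules := { cut := true, peirce := true }
/-- sMC* = sC + (g-ex-middle). -/
def sMCstar : Rules := { cut := true, gem := true }

/-- Weakening is admissible in all the calculi. -/
theorem SC.weak {R : Rules} {Γ : Finset Fm} {c : Fm} (h : SC R Γ c) :
    ∀ {Δ : Finset Fm}, Γ ⊆ Δ → SC R Δ c := by
  induction h with
  | init1 p Γ =>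
    intro Δ hs
    have hm : var p ∈ Δ := hs (Finset.mem_insert_self _ _)
    have := SC.init1 (R := R) p Δ
    rwa [Finset.insert_eq_self.mpr hm] at this
  | init2 p Γ =>
    intro Δ hs
    have hm : neg (var p) ∈ Δ := hs (Finset.mem_insert_self _ _)
    have := SC.init2 (R := R) p Δ
    rwa [Finset.insert_eq_self.mpr hm] at this
  | cut hr _ _ ih1 ih2 =>
    intro Δ hs
    have := SC.cut hr (ih1 (Finset.subset_union_left.trans hs))
      (ih2 (Finset.insert_subset_insert _ (Finset.subset_union_right.trans hs)))
    rwa [Finset.union_self] at this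
  | implL _ _ ih1 ih2 =>
    intro Θ hs
    rw [Finset.insert_subset_iff] at hs
    have := SC.implL (ih1 (Finset.subset_union_left.trans hs.2))
      (ih2 (Finset.insert_subset_insert _ (Finset.subset_union_right.trans hs.2)))
    rwa [Finset.union_self, Finset.insert_eq_self.mpr hs.1] at this
  | implR _ ih =>
    intro Θ hs
    exact SC.implR (ih (Finset.insert_subset_insert _ hs))
  | conjL _ ih =>
    intro Θ hs
    rw [Finset.insert_subset_iff] at hs
    have := SC.conjL (ih (Finset.insert_subset_insert _ (Finset.insert_subset_insert _ hs.2)))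
    rwa [Finset.insert_eq_self.mpr hs.1] at this
  | conjR _ _ ih1 ih2 =>
    intro Θ hs
    exact SC.conjR (ih1 hs) (ih2 hs)
  | disjL _ _ ih1 ih2 =>
    intro Θ hs
    rw [Finset.insert_subset_iff] at hs
    have := SC.disjL (ih1 (Finset.insert_subset_insert _ hs.2))
      (ih2 (Finset.insert_subset_insert _ hs.2))
    rwa [Finset.insert_eq_self.mpr hs.1] at this
  | disjR1 _ ih => exact fun hs => SC.disjR1 (ih hs)
  | disjR2 _ ih => exact fun hs => SC.disjR2 (ih hs)
  | negnegL _ ih =>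
    intro Θ hs
    rw [Finset.insert_subset_iff] at hs
    have := SC.negnegL (ih (Finset.insert_subset_insert _ hs.2))
    rwa [Finset.insert_eq_self.mpr hs.1] at this
  | negnegR _ ih => exact fun hs => SC.negnegR (ih hs)
  | negimplL _ _ ih1 ih2 =>
    intro Θ hs
    rw [Finset.insert_subset_iff] at hs
    have := SC.negimplL (ih1 (Finset.subset_union_left.trans hs.2))
      (ih2 (Finset.insert_subset_insert _ (Finset.subset_union_right.trans hs.2)))
    rwa [Finset.union_self, Finset.insert_eq_self.mpr hs.1] at this
  | negimplR _ ih =>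
    intro Θ hs
    exact SC.negimplR (ih (Finset.insert_subset_insert _ hs))
  | negconjL _ _ ih1 ih2 =>
    intro Θ hs
    rw [Finset.insert_subset_iff] at hs
    have := SC.negconjL (ih1 (Finset.insert_subset_insert _ hs.2))
      (ih2 (Finset.insert_subset_insert _ hs.2))
    rwa [Finset.insert_eq_self.mpr hs.1] at this
  | negconjR1 _ ih => exact fun hs => SC.negconjR1 (ih hs)
  | negconjR2 _ ih => exact fun hs => SC.negconjR2 (ih hs)
  | negdisjL _ ih =>
    intro Θ hs
    rw [Finset.insert_subset_iff] at hs
    have := SC.negdisjL (ih (Finset.insert_subset_insert _ (Finset.insert_subset_insert _ hs.2)))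
    rwa [Finset.insert_eq_self.mpr hs.1] at this
  | negdisjR _ _ ih1 ih2 =>
    intro Θ hs
    exact SC.negdisjR (ih1 hs) (ih2 hs)
  | exMid hr _ _ ih1 ih2 =>
    intro Θ hs
    exact SC.exMid hr (ih1 (Finset.insert_subset_insert _ hs))
      (ih2 (Finset.insert_subset_insert _ hs))
  | peirce hr _ ih =>
    intro Θ hs
    exact SC.peirce hr (ih (Finset.insert_subset_insert _ hs))
  | gem hr _ _ ih1 ih2 =>
    intro Θ hs
    exact SC.gem hr (ih1 (Finset.insert_subset_insert _ hs))
      (ih2 (Finset.insert_subset_insert _ hs))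
  | atEx hr _ _ ih1 ih2 =>
    intro Θ hs
    exact SC.atEx hr (ih1 (Finset.insert_subset_insert _ hs))
      (ih2 (Finset.insert_subset_insert _ hs))

/-- Generalized identity axioms: α,Γ ⇒ α and ∼α,Γ ⇒ ∼α for all formulas α. -/
theorem SC.idAll {R : Rules} (a : Fm) : ∀ Γ : Finset Fm,
    SC R (insert a Γ) a ∧ SC R (insert (neg a) Γ) (neg a) := by
  induction a with
  | var p => exact fun Γ => ⟨SC.init1 p Γ, SC.init2 p Γ⟩
  | conj a b iha ihb =>
    intro Γ
    refine ⟨SC.conjL (SC.conjR (iha _).1 ?_), SC.negconjL (SC.negconjR1 (iha _).2)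
      (SC.negconjR2 (ihb _).2)⟩
    rw [Finset.insert_comm]; exact (ihb _).1
  | disj a b iha ihb =>
    intro Γ
    refine ⟨SC.disjL (SC.disjR1 (iha _).1) (SC.disjR2 (ihb _).1),
      SC.negdisjL (SC.negdisjR (iha _).2 ?_)⟩
    rw [Finset.insert_comm]; exact (ihb _).2
  | impl a b iha ihb =>
    intro Γ
    constructor
    · apply SC.implR
      rw [Finset.insert_comm]
      have := SC.implL (R := R) (Γ := insert a Γ) (Δ := Γ) (iha Γ).1 (ihb Γ).1
      rwa [Finset.insert_union, Finset.union_self] at this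
    · apply SC.negimplR
      rw [Finset.insert_comm]
      have := SC.negimplL (R := R) (Γ := insert a Γ) (Δ := Γ) (iha Γ).1 (ihb Γ).2
      rwa [Finset.insert_union, Finset.union_self] at this
  | neg a iha =>
    intro Γ
    exact ⟨(iha Γ).2, SC.negnegL (SC.negnegR (iha Γ).1)⟩

/-- Context-preserving cut. -/
theorem SC.cut0 {R : Rules} (hR : R.cut = true) {Γ : Finset Fm} {x c : Fm}
    (h1 : SC R Γ x) (h2 : SC R (insert x Γ) c) : SC R Γ c := by
  have := SC.cut hR h1 h2
  rwa [Finset.union_self] at this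

/-- (ex-middle) for arbitrary formulas is admissible in sC + cut + (at-ex-middle). -/
theorem SC.exAdm (a : Fm) : ∀ (Γ : Finset Fm) (c : Fm),
    SC { cut := true, atEx := true } (insert (neg a) Γ) c →
    SC { cut := true, atEx := true } (insert a Γ) c →
    SC { cut := true, atEx := true } Γ c := by
  induction a with
  | var p => exact fun Γ c hn hp => SC.atEx rfl hn hp
  | neg b ihb =>
    intro Γ c hn hp
    -- from ∼∼b,Γ ⇒ c we get b,Γ ⇒ c by cut with b ⇒ ∼∼b
    have hb : SC { cut := true, atEx := true } (insert b Γ) c :=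
      SC.cut0 rfl (SC.negnegR (SC.idAll b Γ).1) (hn.weak (Finset.insert_subset_insert _ (Finset.subset_insert _ _)))
    exact ihb Γ c hp hb
  | conj a b iha ihb =>
    intro Γ c hn hp
    have hna : SC { cut := true, atEx := true } (insert (neg a) Γ) c :=
      SC.cut0 rfl (SC.negconjR1 (SC.idAll a Γ).2)
        (hn.weak (Finset.insert_subset_insert _ (Finset.subset_insert _ _)))
    have hnb : SC { cut := true, atEx := true } (insert (neg b) Γ) c :=
      SC.cut0 rfl (SC.negconjR2 (SC.idAll b Γ).2)
        (hn.weak (Finset.insert_subset_insert _ (Finset.subset_insert _ _)))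
    -- a,Γ ⇒ c
    have hab : SC { cut := true, atEx := true } (insert b (insert a Γ)) c := by
      refine SC.cut0 rfl (SC.conjR (R := { cut := true, atEx := true })
        (Γ := insert b (insert a Γ)) ?_ (SC.idAll b _).1)
        (hp.weak (Finset.insert_subset_insert _ ((Finset.subset_insert _ _).trans (Finset.subset_insert _ _))))
      rw [Finset.insert_comm]; exact (SC.idAll a _).1
    have ha : SC { cut := true, atEx := true } (insert a Γ) c :=
      ihb (insert a Γ) c (hnb.weak (Finset.insert_subset_insert _ (Finset.subset_insert _ _))) hab
    exact iha Γ c hna ha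
  | disj a b iha ihb =>
    intro Γ c hn hp
    have ha : SC { cut := true, atEx := true } (insert a Γ) c :=
      SC.cut0 rfl (SC.disjR1 (SC.idAll a Γ).1)
        (hp.weak (Finset.insert_subset_insert _ (Finset.subset_insert _ _)))
    have hb : SC { cut := true, atEx := true } (insert b Γ) c :=
      SC.cut0 rfl (SC.disjR2 (SC.idAll b Γ).1)
        (hp.weak (Finset.insert_subset_insert _ (Finset.subset_insert _ _)))
    have hnab : SC { cut := true, atEx := true } (insert (neg b) (insert (neg a) Γ)) c := by
      refine SC.cut0 rfl (SC.negdisjR (R := { cut := true, atEx := true })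
        (Γ := insert (neg b) (insert (neg a) Γ)) ?_ (SC.idAll b _).2)
        (hn.weak (Finset.insert_subset_insert _ ((Finset.subset_insert _ _).trans (Finset.subset_insert _ _))))
      rw [Finset.insert_comm]; exact (SC.idAll a _).2
    have hna : SC { cut := true, atEx := true } (insert (neg a) Γ) c :=
      ihb (insert (neg a) Γ) c hnab
        (hb.weak (Finset.insert_subset_insert _ (Finset.subset_insert _ _)))
    exact iha Γ c hna ha
  | impl a b iha ihb =>
    intro Γ c hn hp
    have hb : SC { cut := true, atEx := true } (insert b Γ) c := by
      refine SC.cut0 rfl (SC.implR ?_)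
        (hp.weak (Finset.insert_subset_insert _ (Finset.subset_insert _ _)))
      rw [Finset.insert_comm]; exact (SC.idAll b _).1
    have hnb : SC { cut := true, atEx := true } (insert (neg b) Γ) c := by
      refine SC.cut0 rfl (SC.negimplR ?_)
        (hn.weak (Finset.insert_subset_insert _ (Finset.subset_insert _ _)))
      rw [Finset.insert_comm]; exact (SC.idAll b _).2
    exact ihb Γ c hnb hb

/-- (ex-middle) is admissible given only its atomic restriction:
sC + cut + (at-ex-middle) proves every sequent provable in sC + cut + (ex-middle). -/
theorem stmt16 (Γ : Finset Fm) (γ : Fm)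
    (h : SC { cut := true, exMid := true } Γ γ) :
    SC { cut := true, atEx := true } Γ γ := by
  induction h with
  | init1 p Γ => exact SC.init1 p Γ
  | init2 p Γ => exact SC.init2 p Γ
  | cut _ _ _ ih1 ih2 => exact SC.cut rfl ih1 ih2
  | implL _ _ ih1 ih2 => exact SC.implL ih1 ih2
  | implR _ ih => exact SC.implR ih
  | conjL _ ih => exact SC.conjL ih
  | conjR _ _ ih1 ih2 => exact SC.conjR ih1 ih2
  | disjL _ _ ih1 ih2 => exact SC.disjL ih1 ih2
  | disjR1 _ ih => exact SC.disjR1 ih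
  | disjR2 _ ih => exact SC.disjR2 ih
  | negnegL _ ih => exact SC.negnegL ih
  | negnegR _ ih => exact SC.negnegR ih
  | negimplL _ _ ih1 ih2 => exact SC.negimplL ih1 ih2
  | negimplR _ ih => exact SC.negimplR ih
  | negconjL _ _ ih1 ih2 => exact SC.negconjL ih1 ih2
  | negconjR1 _ ih => exact SC.negconjR1 ih
  | negconjR2 _ ih => exact SC.negconjR2 ih
  | negdisjL _ ih => exact SC.negdisjL ih
  | negdisjR _ _ ih1 ih2 => exact SC.negdisjR ih1 ih2
  | exMid _ _ _ ih1 ih2 => exact SC.exAdm _ _ _ ih1 ih2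
  | peirce hr _ _ => simp at hr
  | gem hr _ _ _ _ => simp at hr
  | atEx hr _ _ _ _ => simp at hr
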